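/- arXiv:2503.20647 — 3 statements merged into one kernel-verified Lean document; each statement's English description precedes it below -/
import Mathlib

section
/- Nonexistence of Armstrong relations in the Boolean setting: there is a set Σ' of inclusion atoms over the propositional variables {p_1, p_2, p_3} (namely Σ' = {p_1 ⊆ p_2}) such that no Boolean team T over {p_1, p_2, p_3} satisfies exactly the inclusion atoms over {p_1, p_2, p_3} that Σ' semantically entails; that is, for every Boolean team T there exists an inclusion atom a over {p_1, p_2, p_3} with T ⊨ a not equivalent to Σ' ⊨_bool a. -/
/-- A Boolean team `T` satisfies the inclusion atom `x ⊆ y` if for every `s ∈ T`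
there is `s' ∈ T` with `s(xᵢ) = s'(yᵢ)` for all `i`. -/
def TeamSat {V : Type*} (T : Set (V → Bool)) (x y : List V) : Prop :=
  ∀ s ∈ T, ∃ s' ∈ T, x.map s = y.map s'

/-- Nonexistence of Armstrong relations in the Boolean setting: with
`Σ' = {p₁ ⊆ p₂}` over three distinct variables, no Boolean team satisfies
exactly the inclusion atoms over `{p₁, p₂, p₃}` that `Σ'` semantically entails. -/
theorem no_armstrong_relation_bool {V : Type*}
    (p1 p2 p3 : V) (h12 : p1 ≠ p2) (h13 : p1 ≠ p3) (h23 : p2 ≠ p3) :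
    ∀ T : Set (V → Bool), ∃ a : List V × List V,
      a.1.length = a.2.length ∧
      (∀ v ∈ a.1, v ∈ ({p1, p2, p3} : Set V)) ∧
      (∀ v ∈ a.2, v ∈ ({p1, p2, p3} : Set V)) ∧
      ¬ (TeamSat T a.1 a.2 ↔
          (∀ T' : Set (V → Bool), TeamSat T' [p1] [p2] → TeamSat T' a.1 a.2)) := by
  intro T
  haveI : DecidableEq V := Classical.decEq V
  by_cases h1 : TeamSat T [p1] [p2]
  · by_cases h2 : TeamSat T [p2] [p1]
    · -- p2 ⊆ p1 is satisfied but not entailed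
      refine ⟨([p2], [p1]), rfl, by simp, by simp, fun hiff => ?_⟩
      have hent := hiff.mp h2
      set f0 : V → Bool := fun _ => false with hf0
      set f1 : V → Bool := fun v => if v = p2 then true else false with hf1
      have hsat : TeamSat ({f0, f1} : Set (V → Bool)) [p1] [p2] := by
        intro s hs
        exact ⟨f0, Or.inl rfl, by rcases hs with rfl | rfl <;> simp [hf0, hf1, h12, Ne.symm h12]⟩
      have := hent _ hsat f1 (Or.inr rfl)
      rcases this with ⟨s', hs', heq⟩
      rcases hs' with rfl | rfl <;> simp [hf0, hf1, h12, Ne.symm h12] at heq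
    · by_cases h3 : TeamSat T [p1] [p3]
      · -- p1 ⊆ p3 is satisfied but not entailed
        refine ⟨([p1], [p3]), rfl, by simp, by simp, fun hiff => ?_⟩
        have hent := hiff.mp h3
        set f : V → Bool := fun v => if v = p3 then false else true with hf
        have hsat : TeamSat ({f} : Set (V → Bool)) [p1] [p2] := by
          intro s hs
          exact ⟨f, rfl, by rcases hs with rfl; simp [hf, h13, h23]⟩
        have := hent _ hsat f rfl
        rcases this with ⟨s', hs', heq⟩
        rcases hs' with rfl
        simp [hf, h13] at heq
      · by_cases h4 : TeamSat T [p3] [p2]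
        · -- p3 ⊆ p2 is satisfied but not entailed
          refine ⟨([p3], [p2]), rfl, by simp, by simp, fun hiff => ?_⟩
          have hent := hiff.mp h4
          set f : V → Bool := fun v => if v = p3 then true else false with hf
          have hsat : TeamSat ({f} : Set (V → Bool)) [p1] [p2] := by
            intro s hs
            exact ⟨f, rfl, by rcases hs with rfl; simp [hf, h13, h23]⟩
          have := hent _ hsat f rfl
          rcases this with ⟨s', hs', heq⟩
          rcases hs' with rfl
          simp [hf, h23, Ne.symm h23] at heq
        · -- contradiction: T ⊨ p1⊆p2, T ⊭ p2⊆p1, T ⊭ p1⊆p3, T ⊭ p3⊆p2 is impossible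
          exfalso
          simp only [TeamSat, not_forall] at h2 h3 h4
          push_neg at h2 h3 h4
          obtain ⟨s, hs, hsne⟩ := h2
          obtain ⟨t, ht, htne⟩ := h3
          obtain ⟨u, hu, hune⟩ := h4
          -- every row has p1 ≠ s p2
          have hp1 : ∀ r ∈ T, r p1 = !(s p2) := by
            intro r hr
            have := hsne r hr
            simp only [List.map_cons, List.map_nil, List.cons.injEq, and_true] at this
            cases hb : r p1 <;> cases hc : s p2 <;> simp_all
          -- every row has p3 ≠ t p1 = !(s p2), so p3 = s p2
          have hp3 : ∀ r ∈ T, r p3 = s p2 := by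
            intro r hr
            have h := htne r hr
            simp only [List.map_cons, List.map_nil, List.cons.injEq, and_true] at h
            have := hp1 t ht
            cases hb : r p3 <;> cases hc : s p2 <;> simp_all
          -- every row has p2 ≠ u p3 = s p2, contradicting s itself
          have h := hune s hs
          simp only [List.map_cons, List.map_nil, List.cons.injEq, and_true] at h
          have := hp3 u hu
          simp_all
  · -- p1 ⊆ p2 is entailed but not satisfied
    refine ⟨([p1], [p2]), rfl, by simp, by simp, fun hiff => ?_⟩
    exact h1 (hiff.mpr (fun T' hT' => hT'))
end

section
/- For distinct propositional variables p_a and p_b, the set {p_a ⊆ p_b, p_b ⊆ p_a} does not semantically entail p_a p_b ⊆ p_a p_a, even in the Boolean setting: there exists a Boolean team T with T ⊨ p_a ⊆ p_b and T ⊨ p_b ⊆ p_a but T ⊭ p_a p_b ⊆ p_a p_a. -/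
/-- `{p_a ⊆ p_b, p_b ⊆ p_a}` does not entail `p_a p_b ⊆ p_a p_a`, even in the
Boolean setting. -/
theorem mutual_inclusion_does_not_entail_equality {V : Type*}
    (pa pb : V) (hab : pa ≠ pb) :
    ∃ T : Set (V → Bool),
      TeamSat T [pa] [pb] ∧ TeamSat T [pb] [pa] ∧
      ¬ TeamSat T [pa, pb] [pa, pa] := by
  classical
  set f : V → Bool := fun v => if v = pa then false else true with hf
  set g : V → Bool := fun v => if v = pa then true else false with hg
  have hfa : f pa = false := by simp [hf]
  have hfb : f pb = true := by simp [hf, hab.symm]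
  have hga : g pa = true := by simp [hg]
  have hgb : g pb = false := by simp [hg, hab.symm]
  refine ⟨{f, g}, ?_, ?_, ?_⟩
  · rintro s (rfl | rfl)
    · exact ⟨g, Or.inr rfl, by simp [hfa, hgb]⟩
    · exact ⟨f, Or.inl rfl, by simp [hga, hfb]⟩
  · rintro s (rfl | rfl)
    · exact ⟨g, Or.inr rfl, by simp [hfb, hga]⟩
    · exact ⟨f, Or.inl rfl, by simp [hgb, hfa]⟩
  · intro h
    obtain ⟨s', hs', hs'eq⟩ := h f (Or.inl rfl)
    simp only [List.map] at hs'eq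
    rw [hfa, hfb] at hs'eq
    have h1 : s' pa = false := by injection hs'eq with h _; exact h.symm
    have h2 : s' pa = true := by
      injection hs'eq with _ h; injection h with h _; exact h.symm
    rw [h1] at h2; exact Bool.false_ne_true h2
end

section
/- For pairwise distinct propositional variables x_1, x_2, y_1, y_2, z_1, the set Σ = {y_2z_1 ⊆ z_1z_1, x_1z_1 ⊆ y_1y_2} does not semantically entail x_1x_2 ⊆ y_1y_2 in the Boolean setting: there exists a Boolean team T over {x_1, x_2, y_1, y_2, z_1} satisfying both atoms of Σ but not x_1x_2 ⊆ y_1y_2. -/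
/-- `{y₂z₁ ⊆ z₁z₁, x₁z₁ ⊆ y₁y₂}` does not semantically entail `x₁x₂ ⊆ y₁y₂`
in the Boolean setting. -/
theorem counterexample_two {V : Type*}
    (x1 x2 y1 y2 z1 : V) (hdist : ([x1, x2, y1, y2, z1] : List V).Nodup) :
    ∃ T : Set (V → Bool),
      TeamSat T [y2, z1] [z1, z1] ∧ TeamSat T [x1, z1] [y1, y2] ∧
      ¬ TeamSat T [x1, x2] [y1, y2] := by
  classical
  simp only [List.nodup_cons, List.mem_cons, List.mem_singleton,
    List.not_mem_nil, or_false] at hdist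
  obtain ⟨h1, h2, h3, h4, -⟩ := hdist
  push_neg at h1 h2 h3
  set s : V → Bool := fun v => if v = x2 then true else false with hs
  have sx2 : s x2 = true := by simp [hs]
  have sof : ∀ v, v ≠ x2 → s v = false := fun v hv => by simp [hs, hv]
  refine ⟨{s}, ?_, ?_, ?_⟩
  · rintro t rfl
    refine ⟨s, rfl, ?_⟩
    simp [sof y2 (Ne.symm h2.2.1), sof z1 (Ne.symm h2.2.2)]
  · rintro t rfl
    refine ⟨s, rfl, ?_⟩
    simp [sof x1 h1.1, sof z1 (Ne.symm h2.2.2), sof y1 (Ne.symm h2.1), sof y2 (Ne.symm h2.2.1)]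
  · rintro h
    obtain ⟨s', hs', heq⟩ := h s rfl
    rw [Set.mem_singleton_iff] at hs'
    subst hs'
    simp [sof x1 h1.1, sx2, sof y1 (Ne.symm h2.1), sof y2 (Ne.symm h2.2.1)] at heq
end
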